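/- For every angle θ₁ > 0 there exist constants r₁, λ₁, ε₁ such that in any CAT(-1) space, every piecewise geodesic path whose geodesic pieces each have length at least r₁ and whose successive pieces meet at Alexandrov angle at least θ₁ is a (λ₁, ε₁)-quasi-geodesic. -/

import Mathlib

noncomputable section
open Metric Set

/-- `γ` restricted to `[a,b]` is a unit-speed (minimizing) geodesic segment. -/
def IsGeodesicOn {X : Type*} [MetricSpace X] (γ : ℝ → X) (a b : ℝ) : Prop :=
  a ≤ b ∧ ∀ s ∈ Set.Icc a b, ∀ t ∈ Set.Icc a b, dist (γ s) (γ t) = |s - t|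

/-- Every pair of points is joined by a geodesic segment. -/
def IsGeodesicSpace (X : Type*) [MetricSpace X] : Prop :=
  ∀ x y : X, ∃ γ : ℝ → X, IsGeodesicOn γ 0 (dist x y) ∧ γ 0 = x ∧ γ (dist x y) = y

/-- Comparison condition defining CAT spaces with model space `M`:
for any geodesic triangle and a comparison triangle in `M`, distances between
points on two sides issuing from a common vertex are bounded by the
corresponding distances in the comparison triangle. -/
def CATWith (M : Type*) [MetricSpace M] (X : Type*) [MetricSpace X] : Prop :=
  IsGeodesicSpace X ∧
  ∀ (p q r : X) (γ δ : ℝ → X),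
    IsGeodesicOn γ 0 (dist p q) → γ 0 = p → γ (dist p q) = q →
    IsGeodesicOn δ 0 (dist p r) → δ 0 = p → δ (dist p r) = r →
    ∀ (p' q' r' : M) (γ' δ' : ℝ → M),
      dist p' q' = dist p q → dist p' r' = dist p r → dist q' r' = dist q r →
      IsGeodesicOn γ' 0 (dist p q) → γ' 0 = p' → γ' (dist p q) = q' →
      IsGeodesicOn δ' 0 (dist p r) → δ' 0 = p' → δ' (dist p r) = r' →
      ∀ s ∈ Set.Icc (0:ℝ) (dist p q), ∀ t ∈ Set.Icc (0:ℝ) (dist p r),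
        dist (γ s) (δ t) ≤ dist (γ' s) (δ' t)

/-- A CAT(-1) space: comparison with the hyperbolic plane of curvature `-1`. -/
def CATMinusOne (X : Type*) [MetricSpace X] : Prop := CATWith UpperHalfPlane X

/-- A CAT(0) space: comparison with the Euclidean plane. -/
def CATZero (X : Type*) [MetricSpace X] : Prop := CATWith (EuclideanSpace ℝ (Fin 2)) X

/-- A subset is (geodesically) convex if it contains every geodesic segment
between any two of its points. -/
def GConvex {X : Type*} [MetricSpace X] (A : Set X) : Prop :=
  ∀ (γ : ℝ → X) (a b : ℝ), IsGeodesicOn γ a b → γ a ∈ A → γ b ∈ A →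
    ∀ t ∈ Set.Icc a b, γ t ∈ A

/-- Distance between two subsets: the infimum of distances between their points. -/
def setDist {X : Type*} [MetricSpace X] (A B : Set X) : ℝ :=
  sInf ((fun p : X × X => dist p.1 p.2) '' A ×ˢ B)

end


/-- The comparison angle (hyperbolic law of cosines): the angle at the vertex of
a hyperbolic triangle with adjacent sides `s, t` and opposite side `d`. -/
noncomputable def compAngle (s t d : ℝ) : ℝ :=
  Real.arccos ((Real.cosh s * Real.cosh t - Real.cosh d) / (Real.sinh s * Real.sinh t))

/-- `c` is a (λ,ε)-quasi-geodesic on `[a,b]` (parametrized by arclength). -/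
def IsQuasiGeodesicOn {X : Type*} [MetricSpace X] (lam eps : ℝ) (c : ℝ → X)
    (a b : ℝ) : Prop :=
  ∀ s ∈ Set.Icc a b, ∀ t ∈ Set.Icc a b, |s - t| ≤ lam * dist (c s) (c t) + eps

/-- `c` is a piecewise geodesic with break points `T 0 < T 1 < ... < T n`, each
piece of length at least `r`, and with (Alexandrov) angle at least `θ` between
successive pieces; in a CAT(-1) space the Alexandrov angle is at least `θ` iff
every comparison angle is at least `θ`. -/
def PiecewiseGeodesicWith {X : Type*} [MetricSpace X] (c : ℝ → X) (T : ℕ → ℝ)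
    (n : ℕ) (r θ : ℝ) : Prop :=
  0 < n ∧
  (∀ i < n, T i < T (i + 1) ∧ r ≤ T (i + 1) - T i ∧ IsGeodesicOn c (T i) (T (i + 1))) ∧
  ∀ i, 0 < i → i < n →
    ∀ s, 0 < s → s ≤ T i - T (i - 1) → ∀ t, 0 < t → t ≤ T (i + 1) - T i →
      θ ≤ compAngle s t (dist (c (T i - s)) (c (T i + t)))

section Helpers
open Real
set_option maxHeartbeats 1000000

namespace Stmt2Helpers

lemma Dpos (u v E : ℝ) (h : u^2 + v^2 = 1) (hE : 0 < E) : 0 < u^2 + v^2*E^2 := by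
  rcases le_or_gt 1 E with h1 | h1
  · have : v^2*1 ≤ v^2*E^2 := by
      apply mul_le_mul_of_nonneg_left _ (sq_nonneg v); nlinarith
    nlinarith
  · have : u^2*E^2 ≤ u^2*1 := by
      apply mul_le_mul_of_nonneg_left _ (sq_nonneg u); nlinarith
    nlinarith

noncomputable def ptH (u v t : ℝ) (h : u^2+v^2 = 1) : UpperHalfPlane :=
  ⟨⟨u*v*(1 - Real.exp t^2)/(u^2+v^2*Real.exp t^2), Real.exp t/(u^2+v^2*Real.exp t^2)⟩,
    div_pos (Real.exp_pos t) (Dpos u v _ h (Real.exp_pos t))⟩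

lemma ptH_re (u v t : ℝ) (h : u^2+v^2=1) :
    (ptH u v t h : ℂ).re = u*v*(1 - Real.exp t^2)/(u^2+v^2*Real.exp t^2) := rfl
lemma ptH_im (u v t : ℝ) (h : u^2+v^2=1) :
    (ptH u v t h : ℂ).im = Real.exp t/(u^2+v^2*Real.exp t^2) := rfl

lemma h10 : (1:ℝ)^2 + (0:ℝ)^2 = 1 := by norm_num

lemma cosh_dist_ptH (u v s t : ℝ) (h : u^2+v^2 = 1) :
    Real.cosh (dist (ptH 1 0 s h10) (ptH u v t h)) =
      Real.cosh s * Real.cosh t - Real.sinh s * Real.sinh t * (u^2 - v^2) := by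
  have hE := Real.exp_pos s
  have hF := Real.exp_pos t
  have hD2 := Dpos u v _ h hF
  rw [UpperHalfPlane.cosh_dist]
  have hd : dist (ptH 1 0 s h10 : ℂ) (ptH u v t h : ℂ) ^ 2 =
      ((ptH 1 0 s h10 : ℂ).re - (ptH u v t h : ℂ).re)^2
      + ((ptH 1 0 s h10 : ℂ).im - (ptH u v t h : ℂ).im)^2 := by
    rw [Complex.dist_eq, Complex.sq_norm, Complex.normSq_apply, Complex.sub_re, Complex.sub_im]
    ring
  rw [hd, ptH_re, ptH_im, ptH_re, ptH_im, UpperHalfPlane.im, UpperHalfPlane.im,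
    ptH_im, ptH_im, Real.cosh_eq, Real.cosh_eq, Real.sinh_eq, Real.sinh_eq,
    Real.exp_neg, Real.exp_neg]
  norm_num
  field_simp
  linear_combination ((-1*v^2*(rexp t)^2) + (1*v^2*(rexp t)^4) + (1*u^2*(rexp s)^2) + (1*v^2*(rexp s)^2*(rexp t)^2) + (-2*(rexp t)^2) + (1*u^2*(rexp s)^2*(rexp t)^2) + (-1*u^2*(rexp t)^2) + (1*u^2) + (1*v^2*(rexp s)^2*(rexp t)^4)) * h

lemma dist_ptH_same (u v s t : ℝ) (h : u^2+v^2 = 1) :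
    Real.cosh (dist (ptH u v s h) (ptH u v t h)) = Real.cosh (s - t) := by
  have hE := Real.exp_pos s
  have hF := Real.exp_pos t
  have hD1 := Dpos u v _ h hE
  have hD2 := Dpos u v _ h hF
  rw [UpperHalfPlane.cosh_dist]
  have hd : dist (ptH u v s h : ℂ) (ptH u v t h : ℂ) ^ 2 =
      ((ptH u v s h : ℂ).re - (ptH u v t h : ℂ).re)^2
      + ((ptH u v s h : ℂ).im - (ptH u v t h : ℂ).im)^2 := by
    rw [Complex.dist_eq, Complex.sq_norm, Complex.normSq_apply, Complex.sub_re, Complex.sub_im]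
    ring
  rw [hd, ptH_re, ptH_im, ptH_re, ptH_im, UpperHalfPlane.im, UpperHalfPlane.im,
    ptH_im, ptH_im, Real.cosh_sub, Real.cosh_eq, Real.cosh_eq, Real.sinh_eq, Real.sinh_eq,
    Real.exp_neg, Real.exp_neg]
  field_simp
  linear_combination ((-4*u^2*v^4*(rexp s)^2*(rexp t)^2) + (2*u^2*v^4*(rexp t)^4) + (2*u^4*v^2*(rexp s)^4) + (-4*u^4*v^2*(rexp s)^2*(rexp t)^2) + (2*u^2*v^4*(rexp s)^4) + (2*u^4*v^2*(rexp t)^4) + (2*u^2*v^2*(rexp s)^4) + (-4*u^2*v^2*(rexp s)^2*(rexp t)^2) + (2*u^2*v^2*(rexp t)^4)) * h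

lemma cosh_eq_of_nonneg {x y : ℝ} (hx : 0 ≤ x) (hy : 0 ≤ y) (h : Real.cosh x = Real.cosh y) :
    x = y := by
  have h1 := Real.cosh_le_cosh.mp h.le
  have h2 := Real.cosh_le_cosh.mp h.ge
  rw [abs_of_nonneg hx, abs_of_nonneg hy] at h1 h2
  linarith

lemma cosh_le_of_nonneg {x y : ℝ} (hx : 0 ≤ x) (hy : 0 ≤ y) (h : Real.cosh x ≤ Real.cosh y) :
    x ≤ y := by
  have h1 := Real.cosh_le_cosh.mp h
  rwa [abs_of_nonneg hx, abs_of_nonneg hy] at h1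

lemma cosh_le_exp {x : ℝ} (hx : 0 ≤ x) : Real.cosh x ≤ Real.exp x := by
  have h1 := Real.cosh_add_sinh x
  have h2 := Real.cosh_sub_sinh x
  have h3 : Real.exp (-x) ≤ Real.exp x := Real.exp_le_exp.mpr (by linarith)
  linarith

lemma sinh_mul_exp_le {t a : ℝ} (h : t ≤ a) : Real.sinh t * Real.exp a ≤ Real.sinh a * Real.exp t := by
  have h' : Real.exp (t - a) ≤ Real.exp (a - t) := Real.exp_le_exp.mpr (by linarith)
  have ha1 : Real.exp (t - a) = Real.exp t * Real.exp (-a) := by rw [← Real.exp_add]; ring_nf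
  have ha2 : Real.exp (a - t) = Real.exp a * Real.exp (-t) := by rw [← Real.exp_add]; ring_nf
  rw [ha1, ha2] at h'
  rw [Real.sinh_eq, Real.sinh_eq]
  nlinarith [h']

lemma hyp_est {a b c t0 : ℝ} (ht0 : 0 < t0) (ha : t0 ≤ a) (hb : t0 ≤ b) (hc : 0 ≤ c)
    (h2 : 2*t0 ≤ a + b - c) :
    Real.cosh t0^2 - Real.sinh t0^2 * ((Real.cosh a * Real.cosh b - Real.cosh c)/(Real.sinh a * Real.sinh b)) ≤ 3/2 := by
  have hsa : 0 < Real.sinh a := by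
    rw [← Real.sinh_zero]; exact Real.sinh_lt_sinh.mpr (lt_of_lt_of_le ht0 ha)
  have hsb : 0 < Real.sinh b := by
    rw [← Real.sinh_zero]; exact Real.sinh_lt_sinh.mpr (lt_of_lt_of_le ht0 hb)
  have hst : 0 < Real.sinh t0 := by
    rw [← Real.sinh_zero]; exact Real.sinh_lt_sinh.mpr ht0
  have hM : 0 < Real.sinh a * Real.sinh b := mul_pos hsa hsb
  have e1 := sinh_mul_exp_le ha
  have e2 := sinh_mul_exp_le hb
  have e3 : Real.sinh t0^2 * (Real.exp a * Real.exp b) ≤ (Real.sinh a * Real.sinh b) * (Real.exp t0 * Real.exp t0) := by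
    nlinarith [mul_pos hst (Real.exp_pos a), mul_pos hst (Real.exp_pos b), Real.exp_pos a, Real.exp_pos b, Real.exp_pos t0]
  have e4 : Real.exp t0 * Real.exp t0 * Real.exp c ≤ Real.exp a * Real.exp b := by
    rw [← Real.exp_add, ← Real.exp_add, ← Real.exp_add]
    exact Real.exp_le_exp.mpr (by linarith)
  have e5 : Real.sinh t0^2 * Real.exp c ≤ Real.sinh a * Real.sinh b := by
    have hEab : 0 < Real.exp a * Real.exp b := mul_pos (Real.exp_pos a) (Real.exp_pos b)
    have k1 := mul_le_mul_of_nonneg_right e3 (Real.exp_pos c).le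
    have k2 := mul_le_mul_of_nonneg_left e4 hM.le
    have k3 : (Real.sinh t0^2 * Real.exp c) * (Real.exp a * Real.exp b) ≤ (Real.sinh a * Real.sinh b) * (Real.exp a * Real.exp b) := by nlinarith [k1, k2]
    exact le_of_mul_le_mul_right k3 hEab
  have ec1 : Real.exp c * Real.exp (-c) = 1 := by rw [← Real.exp_add]; simp
  have ec2 : Real.exp (-c) ≤ 1 := by
    rw [← Real.exp_zero]; exact Real.exp_le_exp.mpr (by linarith)
  have hcosh : Real.cosh c = (Real.exp c + Real.exp (-c))/2 := Real.cosh_eq c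
  have hW : Real.sinh t0^2 * (Real.cosh c - (Real.cosh a * Real.cosh b - Real.sinh a * Real.sinh b)) ≤ (Real.sinh a * Real.sinh b) * (1/2) := by
    have hab : (1:ℝ) ≤ Real.cosh (a-b) := Real.one_le_cosh (a-b)
    rw [Real.cosh_sub] at hab
    rcases le_or_gt (Real.cosh c - (Real.cosh a * Real.cosh b - Real.sinh a * Real.sinh b)) 0 with hneg | hpos
    · nlinarith [sq_nonneg (Real.sinh t0)]
    · have h6 : Real.sinh t0^2 ≤ Real.sinh a * Real.sinh b * Real.exp (-c) := by
        nlinarith [Real.exp_pos (-c), Real.exp_pos c]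
      have h7 : Real.exp (-c) * (Real.cosh c - 1) ≤ 1/2 := by
        rw [hcosh]
        nlinarith [Real.exp_pos (-c), Real.exp_pos c, sq_nonneg (Real.exp (-c))]
      have h8 : (0:ℝ) ≤ Real.cosh c - 1 := by nlinarith [Real.one_le_cosh c]
      calc Real.sinh t0^2 * (Real.cosh c - (Real.cosh a * Real.cosh b - Real.sinh a * Real.sinh b))
          ≤ Real.sinh t0^2 * (Real.cosh c - 1) := by nlinarith [sq_nonneg (Real.sinh t0)]
        _ ≤ (Real.sinh a * Real.sinh b * Real.exp (-c)) * (Real.cosh c - 1) := mul_le_mul_of_nonneg_right h6 h8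
        _ = (Real.sinh a * Real.sinh b) * (Real.exp (-c) * (Real.cosh c - 1)) := by ring
        _ ≤ (Real.sinh a * Real.sinh b) * (1/2) := mul_le_mul_of_nonneg_left h7 hM.le
  have expand : Real.cosh t0^2 - Real.sinh t0^2 * ((Real.cosh a * Real.cosh b - Real.cosh c)/(Real.sinh a * Real.sinh b))
      = 1 + (Real.sinh t0^2 * (Real.cosh c - (Real.cosh a * Real.cosh b - Real.sinh a * Real.sinh b)))/(Real.sinh a * Real.sinh b) := by
    rw [Real.cosh_sq]
    field_simp
    ring
  rw [expand]
  have hfin : (Real.sinh t0^2 * (Real.cosh c - (Real.cosh a * Real.cosh b - Real.sinh a * Real.sinh b)))/(Real.sinh a * Real.sinh b) ≤ 1/2 := by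
    rw [div_le_iff₀ hM]; linarith [hW]
  linarith

lemma dist_ptH_abs (u v s t : ℝ) (h : u^2+v^2 = 1) :
    dist (ptH u v s h) (ptH u v t h) = |s - t| := by
  apply cosh_eq_of_nonneg dist_nonneg (abs_nonneg _)
  rw [dist_ptH_same, Real.cosh_abs]

lemma ptH_zero (u v : ℝ) (h : u^2+v^2 = 1) : ptH u v 0 h = ptH 1 0 0 h10 := by
  apply UpperHalfPlane.ext
  apply Complex.ext
  · rw [ptH_re, ptH_re, Real.exp_zero]; norm_num
  · rw [ptH_im, ptH_im, Real.exp_zero]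
    norm_num
    rw [h]

lemma isGeodesicOn_ptH (u v : ℝ) (h : u^2+v^2 = 1) (L : ℝ) (hL : 0 ≤ L) :
    IsGeodesicOn (fun s => ptH u v s h) 0 L :=
  ⟨hL, fun s _ t _ => dist_ptH_abs u v s t h⟩

lemma three_half_le_cosh_one : (3:ℝ)/2 ≤ Real.cosh 1 := by
  rw [Real.cosh_eq, Real.exp_neg]
  nlinarith [Real.exp_one_gt_d9, Real.exp_one_lt_d9,
    mul_inv_cancel₀ (ne_of_gt (Real.exp_pos 1)), inv_pos.mpr (Real.exp_pos 1)]

lemma cat_pair {X : Type} [MetricSpace X] (hX : CATMinusOne X) (w x y : X) (t0 : ℝ)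
    (ht : 1 < t0) (h1 : t0 ≤ dist w x) (h2 : t0 ≤ dist w y)
    (h3 : 2*t0 ≤ dist w x + dist w y - dist x y)
    (γ δ : ℝ → X) (hγ : IsGeodesicOn γ 0 (dist w x)) (hγ0 : γ 0 = w) (hγ1 : γ (dist w x) = x)
    (hδ : IsGeodesicOn δ 0 (dist w y)) (hδ0 : δ 0 = w) (hδ1 : δ (dist w y) = y) :
    dist (γ t0) (δ t0) ≤ 1 := by
  have ht0 : 0 < t0 := lt_trans one_pos ht
  have ha : 0 < dist w x := lt_of_lt_of_le ht0 h1
  have hb : 0 < dist w y := lt_of_lt_of_le ht0 h2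
  have hsa : 0 < Real.sinh (dist w x) := by
    rw [← Real.sinh_zero]; exact Real.sinh_lt_sinh.mpr ha
  have hsb : 0 < Real.sinh (dist w y) := by
    rw [← Real.sinh_zero]; exact Real.sinh_lt_sinh.mpr hb
  have hM : 0 < Real.sinh (dist w x) * Real.sinh (dist w y) := mul_pos hsa hsb
  have hc0 : (0:ℝ) ≤ dist x y := dist_nonneg
  have habc : dist x y ≤ dist w x + dist w y := by
    rw [dist_comm w x]; exact dist_triangle x w y
  have hcab : |dist w x - dist w y| ≤ dist x y := by
    rw [dist_comm w x, dist_comm w y]; exact abs_dist_sub_le x y w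
  set a := dist w x with hadef
  set b := dist w y with hbdef
  set c := dist x y with hcdef
  set Q := (Real.cosh a * Real.cosh b - Real.cosh c) / (Real.sinh a * Real.sinh b) with hQdef
  have hQ1 : Q ≤ 1 := by
    rw [hQdef, div_le_one hM]
    have hcc : Real.cosh (a - b) ≤ Real.cosh c := by
      apply Real.cosh_le_cosh.mpr
      rwa [abs_of_nonneg hc0]
    rw [Real.cosh_sub] at hcc; linarith
  have hQ2 : -1 ≤ Q := by
    rw [hQdef, le_div_iff₀ hM]
    have hcc : Real.cosh c ≤ Real.cosh (a + b) := by
      apply Real.cosh_le_cosh.mpr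
      rw [abs_of_nonneg hc0, abs_of_nonneg (by linarith : (0:ℝ) ≤ a + b)]
      exact habc
    rw [Real.cosh_add] at hcc; linarith
  set u := Real.sqrt ((1+Q)/2) with hudef
  set v := Real.sqrt ((1-Q)/2) with hvdef
  have hu : u^2 = (1+Q)/2 := Real.sq_sqrt (by linarith)
  have hv : v^2 = (1-Q)/2 := Real.sq_sqrt (by linarith)
  have huv : u^2 + v^2 = 1 := by rw [hu, hv]; ring
  have huv2 : u^2 - v^2 = Q := by rw [hu, hv]; ring
  have dpq : dist (ptH 1 0 0 h10) (ptH 1 0 a h10) = a := by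
    rw [dist_ptH_abs, abs_of_nonpos (by linarith : (0:ℝ) - a ≤ 0)]; ring
  have dpr : dist (ptH 1 0 0 h10) (ptH u v b huv) = b := by
    rw [← ptH_zero u v huv, dist_ptH_abs, abs_of_nonpos (by linarith : (0:ℝ) - b ≤ 0)]; ring
  have dqr : dist (ptH 1 0 a h10) (ptH u v b huv) = c := by
    apply cosh_eq_of_nonneg dist_nonneg hc0
    rw [cosh_dist_ptH, huv2, hQdef]
    field_simp
    ring
  have hcomp := hX.2 w x y γ δ hγ hγ0 hγ1 hδ hδ0 hδ1
    (ptH 1 0 0 h10) (ptH 1 0 a h10) (ptH u v b huv)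
    (fun s => ptH 1 0 s h10) (fun s => ptH u v s huv)
    dpq dpr dqr
    (isGeodesicOn_ptH 1 0 h10 a ha.le) rfl rfl
    (isGeodesicOn_ptH u v huv b hb.le) (ptH_zero u v huv) rfl
    t0 ⟨ht0.le, h1⟩ t0 ⟨ht0.le, h2⟩
  have hbound : Real.cosh (dist (ptH 1 0 t0 h10) (ptH u v t0 huv)) ≤ Real.cosh 1 := by
    rw [cosh_dist_ptH, huv2]
    have hest := hyp_est ht0 h1 h2 hc0 h3
    rw [← hQdef] at hest
    calc Real.cosh t0 * Real.cosh t0 - Real.sinh t0 * Real.sinh t0 * Q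
        = Real.cosh t0^2 - Real.sinh t0^2 * Q := by ring
      _ ≤ 3/2 := hest
      _ ≤ Real.cosh 1 := three_half_le_cosh_one
  have := cosh_le_of_nonneg dist_nonneg zero_le_one hbound
  exact le_trans hcomp this

lemma four_point {X : Type} [MetricSpace X] (hX : CATMinusOne X) (w x y z : X) :
    min (dist w x + dist w y - dist x y) (dist w y + dist w z - dist y z) - 2
      ≤ dist w x + dist w z - dist x z := by
  set m := min (dist w x + dist w y - dist x y) (dist w y + dist w z - dist y z) with hmdef
  rcases le_or_gt m 2 with hm | hm
  · have := dist_triangle x w z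
    rw [dist_comm x w] at this
    linarith
  · set t0 := m / 2 with ht0def
    have ht : 1 < t0 := by rw [ht0def]; linarith
    have ht0 : 0 < t0 := lt_trans one_pos ht
    have hm1 : m ≤ dist w x + dist w y - dist x y := min_le_left _ _
    have hm2 : m ≤ dist w y + dist w z - dist y z := min_le_right _ _
    have hxy : |dist w x - dist w y| ≤ dist x y := by
      rw [dist_comm w x, dist_comm w y]; exact abs_dist_sub_le x y w
    have hyz : |dist w y - dist w z| ≤ dist y z := by
      rw [dist_comm w y, dist_comm w z]; exact abs_dist_sub_le y z w
    have habs1 := abs_le.mp hxy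
    have habs2 := abs_le.mp hyz
    have htx : t0 ≤ dist w x := by rw [ht0def]; linarith
    have hty : t0 ≤ dist w y := by rw [ht0def]; linarith
    have htz : t0 ≤ dist w z := by rw [ht0def]; linarith
    obtain ⟨γ, hγ, hγ0, hγ1⟩ := hX.1 w x
    obtain ⟨δ, hδ, hδ0, hδ1⟩ := hX.1 w y
    obtain ⟨η, hη, hη0, hη1⟩ := hX.1 w z
    have d1 : dist (γ t0) (δ t0) ≤ 1 :=
      cat_pair hX w x y t0 ht htx hty (by rw [ht0def]; linarith) γ δ hγ hγ0 hγ1 hδ hδ0 hδ1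
    have d2 : dist (δ t0) (η t0) ≤ 1 :=
      cat_pair hX w y z t0 ht hty htz (by rw [ht0def]; linarith) δ η hδ hδ0 hδ1 hη hη0 hη1
    have dxγ : dist x (γ t0) = dist w x - t0 := by
      have := hγ.2 (dist w x) ⟨dist_nonneg, le_refl _⟩ t0 ⟨ht0.le, htx⟩
      rw [hγ1] at this
      rw [this, abs_of_nonneg (by linarith)]
    have dzη : dist (η t0) z = dist w z - t0 := by
      have := hη.2 t0 ⟨ht0.le, htz⟩ (dist w z) ⟨dist_nonneg, le_refl _⟩
      rw [hη1] at this
      rw [this, abs_of_nonpos (by linarith)]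
      ring
    have tri : dist x z ≤ dist x (γ t0) + dist (γ t0) (δ t0) + dist (δ t0) (η t0) + dist (η t0) z := by
      calc dist x z ≤ dist x (η t0) + dist (η t0) z := dist_triangle _ _ _
        _ ≤ (dist x (δ t0) + dist (δ t0) (η t0)) + dist (η t0) z := by
            linarith [dist_triangle x (δ t0) (η t0)]
        _ ≤ ((dist x (γ t0) + dist (γ t0) (δ t0)) + dist (δ t0) (η t0)) + dist (η t0) z := by
            linarith [dist_triangle x (γ t0) (δ t0)]
        _ = _ := by ring
    rw [dxγ, dzη] at tri
    have : m = 2 * t0 := by rw [ht0def]; ring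
    linarith

lemma chain_lemma {X : Type} [MetricSpace X] (C : ℝ) (hC : 0 ≤ C)
    (fp : ∀ w x y z : X, min (dist w x + dist w y - dist x y)
      (dist w y + dist w z - dist y z) - 2 ≤ dist w x + dist w z - dist x z)
    (x : ℕ → X) (N : ℕ)
    (edge : ∀ i, i + 2 ≤ N → C + 2 < dist (x i) (x (i+1)))
    (vertex : ∀ i, 1 ≤ i → i + 1 ≤ N →
      dist (x (i-1)) (x i) + dist (x i) (x (i+1)) - dist (x (i-1)) (x (i+1)) ≤ C) :
    ∀ m, m ≤ N → 1 ≤ m →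
      ((∑ i ∈ Finset.range m, dist (x i) (x (i+1))) - (C+2) * ((m:ℝ) - 1) ≤ dist (x 0) (x m)
      ∧ dist (x 0) (x (m-1)) + dist (x (m-1)) (x m) - (C+2) ≤ dist (x 0) (x m)) := by
  intro m
  induction m with
  | zero => intro _ h; omega
  | succ m ih =>
    intro hmN _
    rcases Nat.eq_zero_or_pos m with rfl | hm1
    · constructor
      · simp
      · simp [dist_self]; linarith
    · have ⟨ihsum, ihpair⟩ := ih (by omega) hm1
      have hpair : dist (x 0) (x m) + dist (x m) (x (m+1)) - (C+2) ≤ dist (x 0) (x (m+1)) := by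
        have hfp := fp (x m) (x (m-1)) (x 0) (x (m+1))
        have hvx := vertex m hm1 hmN
        have hedge := edge (m-1) (by omega)
        have hm1' : m - 1 + 1 = m := by omega
        rw [hm1'] at hedge
        have hA : C + 2 < dist (x m) (x (m-1)) + dist (x m) (x 0) - dist (x (m-1)) (x 0) := by
          rw [dist_comm (x m) (x (m-1)), dist_comm (x m) (x 0), dist_comm (x (m-1)) (x 0)]
          linarith
        have hrhs : dist (x m) (x (m-1)) + dist (x m) (x (m+1)) - dist (x (m-1)) (x (m+1)) ≤ C := by
          rw [dist_comm (x m) (x (m-1))]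
          exact hvx
        have hmin := le_trans hfp hrhs
        rcases le_or_gt (dist (x m) (x (m-1)) + dist (x m) (x 0) - dist (x (m-1)) (x 0))
            (dist (x m) (x 0) + dist (x m) (x (m+1)) - dist (x 0) (x (m+1))) with hc | hc
        · rw [min_eq_left hc] at hmin; linarith
        · rw [min_eq_right hc.le] at hmin
          rw [dist_comm (x m) (x 0)] at hmin
          linarith
      constructor
      · rw [Finset.sum_range_succ]
        push_cast
        linarith
      · simpa using hpair

end Stmt2Helpers
end Helpers

set_option maxHeartbeats 2000000 in
open Stmt2Helpers in
/-- For every θ₁ > 0 there are constants r₁, λ₁, ε₁ such that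
in any CAT(-1) space every piecewise geodesic with pieces of length at least r₁
meeting at angles at least θ₁ is a (λ₁, ε₁)-quasi-geodesic. -/
theorem statement2 (θ₁ : ℝ) (hθ : 0 < θ₁) :
    ∃ r₁ lam₁ ε₁ : ℝ, 0 < r₁ ∧ 1 ≤ lam₁ ∧ 0 ≤ ε₁ ∧
      ∀ (X : Type) [MetricSpace X], CATMinusOne X →
        ∀ (c : ℝ → X) (T : ℕ → ℝ) (n : ℕ), PiecewiseGeodesicWith c T n r₁ θ₁ →
          IsQuasiGeodesicOn lam₁ ε₁ c (T 0) (T n) := by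
  classical
  set k : ℝ := Real.cos (min θ₁ Real.pi) with hkdef
  have hmin0 : 0 < min θ₁ Real.pi := lt_min hθ Real.pi_pos
  have hk1 : k < 1 := by
    have h := Real.strictAntiOn_cos (Set.mem_Icc.mpr ⟨le_refl 0, Real.pi_pos.le⟩)
      (Set.mem_Icc.mpr ⟨hmin0.le, min_le_right _ _⟩) hmin0
    rwa [Real.cos_zero] at h
  have hkm1 : (-1:ℝ) ≤ k := Real.neg_one_le_cos _
  have h1k : 0 < 1 - k := by linarith
  set C : ℝ := Real.log (4/(1-k)) with hCdef
  have h4k : (0:ℝ) < 4/(1-k) := by positivity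
  have hC0 : 0 < C := Real.log_pos (by rw [lt_div_iff₀ h1k]; linarith)
  have hexpC : Real.exp C = 4/(1-k) := Real.exp_log h4k
  refine ⟨2*C+4, 2, 3*(2*C+4), by linarith, by norm_num, by linarith, ?_⟩
  intro X _ hX c T n hPWG
  obtain ⟨hn, hpieces, hangles⟩ := hPWG
  have Tmono : ∀ i j : ℕ, i ≤ j → j ≤ n → T i ≤ T j := by
    intro i j hij hjn
    induction j with
    | zero => interval_cases i; exact le_refl _
    | succ j ihj =>
      rcases Nat.lt_or_ge i (j+1) with h | h
      · have h1 : T i ≤ T j := ihj (by omega) (by omega)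
        have h2 : T j < T (j+1) := (hpieces j (by omega)).1
        linarith
      · have : i = j + 1 := by omega
        rw [this]
  -- distance within a piece
  have dpiece : ∀ (m : ℕ), m < n → ∀ p q : ℝ, T m ≤ p → p ≤ q → q ≤ T (m+1) →
      dist (c p) (c q) = q - p := by
    intro m hm p q hp hpq hq
    have hg := (hpieces m hm).2.2
    rw [hg.2 p ⟨hp, le_trans hpq hq⟩ q ⟨le_trans hp hpq, hq⟩,
      abs_of_nonpos (by linarith : p - q ≤ 0)]
    ring
  -- vertex estimate
  have hvert : ∀ i : ℕ, 0 < i → i < n → ∀ s, 0 < s → s ≤ T i - T (i-1) →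
      ∀ t, 0 < t → t ≤ T (i+1) - T i →
      s + t - C ≤ dist (c (T i - s)) (c (T i + t)) := by
    intro i hi0 hin s hs hsle t ht htle
    have hang := hangles i hi0 hin s hs hsle t ht htle
    set d := dist (c (T i - s)) (c (T i + t)) with hddef
    have hd0 : (0:ℝ) ≤ d := dist_nonneg
    have hss : 0 < Real.sinh s := by rw [← Real.sinh_zero]; exact Real.sinh_lt_sinh.mpr hs
    have hstt : 0 < Real.sinh t := by rw [← Real.sinh_zero]; exact Real.sinh_lt_sinh.mpr ht
    set Q := (Real.cosh s * Real.cosh t - Real.cosh d) / (Real.sinh s * Real.sinh t) with hQdef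
    have hm : min θ₁ Real.pi ≤ Real.arccos Q := le_trans (min_le_left _ _) hang
    have hQk : Q ≤ k := by
      rcases le_or_gt Q (-1) with hq | hq
      · linarith
      rcases le_or_gt Q 1 with hq2 | hq2
      · have hco := Real.cos_le_cos_of_nonneg_of_le_pi hmin0.le (Real.arccos_le_pi Q) hm
        rwa [Real.cos_arccos hq.le hq2] at hco
      · exfalso
        have h0 : Real.arccos Q = 0 := Real.arccos_eq_zero.mpr hq2.le
        rw [h0] at hm; linarith
    have hcd : Real.cosh s * Real.cosh t - k * (Real.sinh s * Real.sinh t) ≤ Real.cosh d := by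
      rw [hQdef, div_le_iff₀ (mul_pos hss hstt)] at hQk
      linarith
    have hlow : (1-k)/4 * Real.exp (s+t) ≤
        Real.cosh s * Real.cosh t - k * (Real.sinh s * Real.sinh t) := by
      have e1 := Real.cosh_add s t
      have e2 := Real.cosh_sub s t
      have e3 : Real.exp (s+t) / 2 ≤ Real.cosh (s+t) := by
        rw [Real.cosh_eq]; linarith [Real.exp_pos (-(s+t))]
      have e4 : (1:ℝ) ≤ Real.cosh (s - t) := Real.one_le_cosh _
      have e5 : (0:ℝ) ≤ (1-k) * (Real.cosh (s+t) - Real.exp (s+t)/2) :=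
        mul_nonneg (by linarith) (by linarith)
      have e6 : (0:ℝ) ≤ (1+k) * (Real.cosh (s-t) - 1) :=
        mul_nonneg (by linarith) (by linarith)
      nlinarith [Real.exp_pos (s+t)]
    have hcoshexp : Real.cosh d ≤ Real.exp d := cosh_le_exp hd0
    have hkey : Real.exp (s+t-C) ≤ Real.exp d := by
      have heq : Real.exp (s+t-C) = (1-k)/4 * Real.exp (s+t) := by
        rw [Real.exp_sub, hexpC]
        field_simp
      linarith
    have := Real.exp_le_exp.mp hkey
    linarith
  -- locate
  have locate : ∀ s : ℝ, T 0 ≤ s → s ≤ T n → ∃ j, j < n ∧ T j ≤ s ∧ s ≤ T (j+1) := by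
    intro s hs0 hsn
    by_contra hcon
    push_neg at hcon
    have hall : ∀ m : ℕ, m ≤ n → T m ≤ s := by
      intro m
      induction m with
      | zero => intro _; exact hs0
      | succ m ihm =>
        intro hm
        exact (hcon m (by omega) (ihm (by omega))).le
    have h1 : T (n-1) ≤ s := hall (n-1) (by omega)
    have h2 := hcon (n-1) (by omega) h1
    have h3 : n - 1 + 1 = n := by omega
    rw [h3] at h2
    linarith
  -- core chain estimate
  have core : ∀ j k0 : ℕ, j ≤ k0 → k0 < n → ∀ s t : ℝ, T j ≤ s → s ≤ T (j+1) →
      (j = k0 ∨ 2*C+4 ≤ T (j+1) - s) → T k0 ≤ t → t ≤ T (k0+1) → s ≤ t →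
      t - s ≤ 2 * dist (c s) (c t) := by
    intro j k0 hjk hk0n s t hTjs hsTj1 hcase hTk0t htTk1 hst
    set N : ℕ := k0 - j + 1 with hNdef
    set σ : ℕ → ℝ := fun i => max s (min (T (j+i)) t) with hσdef
    have hTjt : T j ≤ t := le_trans hTjs hst
    have hσ0 : σ 0 = s := by
      simp only [hσdef, Nat.add_zero]
      rw [min_eq_left hTjt, max_eq_left hTjs]
    have hσmid : ∀ i, 1 ≤ i → i ≤ k0 - j → σ i = T (j+i) := by
      intro i h1 h2
      have hle1 : T (j+i) ≤ t := le_trans (Tmono (j+i) k0 (by omega) (by omega)) hTk0t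
      have hle2 : s ≤ T (j+i) := le_trans hsTj1 (Tmono (j+1) (j+i) (by omega) (by omega))
      simp only [hσdef]
      rw [min_eq_left hle1, max_eq_right hle2]
    have hσN : σ N = t := by
      have hjN : j + N = k0 + 1 := by omega
      simp only [hσdef]
      rw [hjN, min_eq_right htTk1, max_eq_right hst]
    have hσle : ∀ i, σ i ≤ t := by
      intro i
      simp only [hσdef]
      exact max_le hst (min_le_right _ _)
    have edgefacts : ∀ i, i ≤ k0 - j → T (j+i) ≤ σ i ∧ σ i ≤ σ (i+1) ∧ σ (i+1) ≤ T (j+i+1) := by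
      intro i hi
      rcases Nat.eq_zero_or_pos i with rfl | hip
      · refine ⟨by rw [hσ0]; simpa using hTjs, ?_, ?_⟩
        · by_cases h1 : 1 ≤ k0 - j
          · rw [hσ0, hσmid 1 le_rfl h1]
            simpa using hsTj1
          · have hN1 : N = 1 := by omega
            have hσ1 : σ 1 = t := by rw [hN1] at hσN; exact hσN
            rw [hσ0, hσ1]
            exact hst
        · by_cases h1 : 1 ≤ k0 - j
          · rw [hσmid 1 le_rfl h1]
          · have hN1 : N = 1 := by omega
            have hσ1 : σ 1 = t := by rw [hN1] at hσN; exact hσN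
            rw [hσ1]
            have : j + 0 + 1 = k0 + 1 := by omega
            rw [this]
            exact htTk1
      · have hσi := hσmid i hip hi
        by_cases h1 : i+1 ≤ k0 - j
        · have hσi1 := hσmid (i+1) (by omega) h1
          refine ⟨le_of_eq hσi.symm, ?_, ?_⟩
          · rw [hσi, hσi1]
            exact Tmono (j+i) (j+(i+1)) (by omega) (by omega)
          · rw [hσi1]
            have : j + (i+1) = j + i + 1 := by omega
            rw [this]
        · have hiN : i + 1 = N := by omega
          have hjk0 : j + i = k0 := by omega
          refine ⟨le_of_eq hσi.symm, ?_, ?_⟩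
          · rw [hσi, hiN, hσN, hjk0]
            exact hTk0t
          · rw [hiN, hσN]
            have : j + i + 1 = k0 + 1 := by omega
            rw [this]
            exact htTk1
    have edgelen : ∀ i, i ≤ k0 - j → dist (c (σ i)) (c (σ (i+1))) = σ (i+1) - σ i := by
      intro i hi
      obtain ⟨h1, h2, h3⟩ := edgefacts i hi
      exact dpiece (j+i) (by omega) _ _ h1 h2 h3
    have hedge : ∀ i, i + 2 ≤ N → C + 2 < dist (c (σ i)) (c (σ (i+1))) := by
      intro i hi
      rw [edgelen i (by omega)]
      rcases Nat.eq_zero_or_pos i with rfl | hip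
      · rw [hσ0, hσmid 1 le_rfl (by omega)]
        rcases hcase with hjeq | hR
        · exfalso; omega
        · have : j + 1 = j + 1 := rfl
          simp only [Nat.add_zero] at *
          linarith
      · rw [hσmid i hip (by omega), hσmid (i+1) (by omega) (by omega)]
        have hp := (hpieces (j+i) (by omega)).2.1
        have : j + (i+1) = j + i + 1 := by omega
        rw [this]
        linarith
    have hvertex : ∀ i, 1 ≤ i → i + 1 ≤ N →
        dist (c (σ (i-1))) (c (σ i)) + dist (c (σ i)) (c (σ (i+1)))
          - dist (c (σ (i-1))) (c (σ (i+1))) ≤ C := by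
      intro i h1 h2
      have hik : i ≤ k0 - j := by omega
      have hσi := hσmid i h1 hik
      have hi1 : i - 1 + 1 = i := by omega
      have e1 : dist (c (σ (i-1))) (c (σ i)) = σ i - σ (i-1) := by
        have := edgelen (i-1) (by omega)
        rwa [hi1] at this
      have e2 : dist (c (σ i)) (c (σ (i+1))) = σ (i+1) - σ i := edgelen i hik
      by_cases ht0 : σ (i+1) = σ i
      · have e3 : dist (c (σ (i-1))) (c (σ (i+1))) = σ i - σ (i-1) := by
          rw [ht0, e1]
        rw [e1, e2, e3, ht0]
        linarith
      · have hmono := (edgefacts i hik).2.1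
        have htpos : 0 < σ (i+1) - σ i := by
          rcases lt_or_eq_of_le hmono with h | h
          · linarith
          · exact absurd h.symm ht0
        have hspos : 0 < σ i - σ (i-1) := by
          rcases Nat.eq_zero_or_pos (i-1) with hz | hp
          · have hi1' : i = 1 := by omega
            rw [hz, hσ0, hi1', hσmid 1 le_rfl (by omega)]
            rcases hcase with hjeq | hR
            · exfalso; omega
            · linarith
          · rw [hσmid (i-1) hp (by omega), hσi]
            have hp2 := (hpieces (j+(i-1)) (by omega)).2.1
            have : j + (i-1) + 1 = j + i := by omega
            rw [this] at hp2
            linarith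
        have hb1 : σ i - σ (i-1) ≤ T (j+i) - T (j+i-1) := by
          have hlb := (edgefacts (i-1) (by omega)).1
          have : j + i - 1 = j + (i-1) := by omega
          rw [this, hσi]
          linarith
        have hb2 : σ (i+1) - σ i ≤ T (j+i+1) - T (j+i) := by
          have hub := (edgefacts i hik).2.2
          rw [hσi]
          linarith
        have hv := hvert (j+i) (by omega) (by omega) (σ i - σ (i-1)) hspos hb1
          (σ (i+1) - σ i) htpos hb2
        have hr1 : T (j+i) - (σ i - σ (i-1)) = σ (i-1) := by rw [← hσi]; ring
        have hr2 : T (j+i) + (σ (i+1) - σ i) = σ (i+1) := by rw [← hσi]; ring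
        rw [hr1, hr2] at hv
        rw [e1, e2]
        linarith
    have hchain := chain_lemma C hC0.le (fun w x y z => four_point hX w x y z)
      (fun i => c (σ i)) N hedge hvertex N le_rfl (by omega)
    obtain ⟨hsum, -⟩ := hchain
    have htel : ∑ i ∈ Finset.range N, dist (c (σ i)) (c (σ (i+1))) = t - s := by
      rw [Finset.sum_congr rfl (fun i hi => edgelen i (by
        have := Finset.mem_range.mp hi; omega))]
      rw [Finset.sum_range_sub (fun i => σ i), hσ0, hσN]
    have hcount : (C+2) * ((N:ℝ) - 1) ≤ (t - s)/2 := by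
      have hNc : ((N:ℝ) - 1) = ((k0 - j : ℕ) : ℝ) := by
        rw [hNdef]; push_cast; ring
      rcases Nat.eq_zero_or_pos (k0 - j) with hz | hp
      · rw [hNc, hz]
        simp only [Nat.cast_zero, mul_zero]
        linarith
      · have hl : ∀ i ∈ Finset.range (k0 - j), 2*C+4 ≤ σ (i+1) - σ i := by
          intro i hi
          have hi' : i < k0 - j := Finset.mem_range.mp hi
          rcases Nat.eq_zero_or_pos i with rfl | hip
          · rw [hσ0, hσmid 1 le_rfl (by omega)]
            rcases hcase with hjeq | hR
            · exfalso; omega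
            · linarith
          · rw [hσmid i hip (by omega), hσmid (i+1) (by omega) (by omega)]
            have hp2 := (hpieces (j+i) (by omega)).2.1
            have : j + (i+1) = j + i + 1 := by omega
            rw [this]
            linarith
        have hsum2 : ((k0 - j : ℕ) : ℝ) * (2*C+4) ≤ ∑ i ∈ Finset.range (k0-j), (σ (i+1) - σ i) := by
          have := Finset.card_nsmul_le_sum (Finset.range (k0-j)) (fun i => σ (i+1) - σ i) (2*C+4) hl
          rwa [Finset.card_range, nsmul_eq_mul] at this
        have htel2 : ∑ i ∈ Finset.range (k0-j), (σ (i+1) - σ i) ≤ t - s := by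
          rw [Finset.sum_range_sub (fun i => σ i), hσ0]
          linarith [hσle (k0-j)]
        rw [hNc]
        nlinarith [hsum2, htel2]
    rw [htel] at hsum
    simp only [hσ0, hσN] at hsum
    linarith
  -- conclusion
  have main2 : ∀ s t : ℝ, T 0 ≤ s → s ≤ T n → T 0 ≤ t → t ≤ T n → s ≤ t →
      t - s ≤ 2 * dist (c s) (c t) + 3*(2*C+4) := by
    intro s t hs0 hsn ht0 htn hst
    obtain ⟨j, hjn, hjs, hsj⟩ := locate s hs0 hsn
    obtain ⟨k0, hk0n, hk0t, htk1⟩ := locate t ht0 htn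
    rcases le_or_gt j k0 with hjk | hkj
    · by_cases hR : 2*C+4 ≤ T (j+1) - s
      · have h := core j k0 hjk hk0n s t hjs hsj (Or.inr hR) hk0t htk1 hst
        linarith [(dist_nonneg : (0:ℝ) ≤ dist (c s) (c t)), hC0]
      · by_cases hjeq : j = k0
        · have h := core j k0 hjk hk0n s t hjs hsj (Or.inl hjeq) hk0t htk1 hst
          linarith [hC0]
        · have hjk1 : j + 1 ≤ k0 := by omega
          have hj1n : j + 1 < n := by omega
          have hTj1t : T (j+1) ≤ t := le_trans (Tmono (j+1) k0 hjk1 (by omega)) hk0t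
          have h2 := core (j+1) k0 hjk1 hk0n (T (j+1)) t (le_refl _)
            (Tmono (j+1) (j+2) (by omega) (by omega))
            (by
              by_cases hjk2 : j + 1 = k0
              · exact Or.inl hjk2
              · right
                have := (hpieces (j+1) hj1n).2.1
                linarith)
            hk0t htk1 hTj1t
          have ds1 : dist (c s) (c (T (j+1))) = T (j+1) - s := dpiece j (by omega) s (T (j+1)) hjs hsj (le_refl _)
          have tri : dist (c (T (j+1))) (c t) ≤ dist (c (T (j+1))) (c s) + dist (c s) (c t) :=
            dist_triangle _ _ _
          rw [dist_comm (c (T (j+1))) (c s), ds1] at tri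
          linarith
    · have hcc : T (k0+1) ≤ T j := Tmono (k0+1) j (by omega) (by omega)
      have : t ≤ s := by linarith
      have h0 : (0:ℝ) ≤ dist (c s) (c t) := dist_nonneg
      linarith [hC0]
  intro s hs t ht
  rcases le_total s t with hst | hst
  · rw [abs_of_nonpos (by linarith)]
    have := main2 s t hs.1 hs.2 ht.1 ht.2 hst
    linarith
  · rw [abs_of_nonneg (by linarith)]
    have := main2 t s ht.1 ht.2 hs.1 hs.2 hst
    rw [dist_comm (c t) (c s)] at this
    linarith
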